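/- Any ternary relation 𝓑 on a finite set that is a betweenness and whose associated graph G(𝓑) is acyclic admits an injective-on-pairs weight function β from two-element subsets into an interval (1/4, 1/4+ε) such that (i,j,k) ∈ 𝓑 implies β({i,j}) > β({i,k}) and β({j,k}) > β({i,k}), for any prescribed ε > 0. -/

import Mathlib

/-- A ternary relation `B` is a betweenness. -/
def IsBetweenness {α : Type*} (B : α → α → α → Prop) : Prop :=
  ∀ x y z, B x y z → (x ≠ y ∧ y ≠ z ∧ x ≠ z) ∧ B z y x ∧ ¬ B z x y
/-- A (finite) directed graph given by an edge relation `E` contains a directed cycle: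
a nonempty closed directed walk. -/
def HasDirectedCycle {V : Type*} (E : V → V → Prop) : Prop :=
  ∃ (n : ℕ) (f : ℕ → V), 0 < n ∧ (∀ i < n, E (f i) (f (i + 1))) ∧ f 0 = f n

lemma transGen_path {V : Type*} {E : V → V → Prop} {a b : V}
    (h : Relation.TransGen E a b) :
    ∃ (n : ℕ) (f : ℕ → V), 0 < n ∧ (∀ i < n, E (f i) (f (i + 1))) ∧ f 0 = a ∧ f n = b := by
  induction h with
  | @single c hab =>
    refine ⟨1, fun i => if i = 0 then a else c, one_pos, ?_, by simp, by simp⟩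
    intro i hi
    have : i = 0 := by omega
    subst this
    simpa using hab
  | @tail b c hab hbc ih =>
    obtain ⟨n, f, hn, hf, h0, hb⟩ := ih
    refine ⟨n + 1, fun i => if i ≤ n then f i else c, by omega, ?_, ?_, ?_⟩
    · intro i hi
      by_cases hin : i < n
      · simp only [show i ≤ n by omega, if_pos, show i + 1 ≤ n by omega]
        exact hf i hin
      · have hi2 : i = n := by omega
        subst hi2
        dsimp only
        rw [if_pos le_rfl, if_neg (by omega), hb]
        exact hbc
    · simpa using h0
    · simp

lemma cycle_of_transGen {V : Type*} {E : V → V → Prop} {a : V}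
    (h : Relation.TransGen E a a) : HasDirectedCycle E := by
  obtain ⟨n, f, hn, hf, h0, hb⟩ := transGen_path h
  exact ⟨n, f, hn, hf, by rw [h0, hb]⟩

lemma exists_rank {V : Type*} [Fintype V] {E : V → V → Prop}
    (h : ¬ HasDirectedCycle E) :
    ∃ K : V → ℕ, Function.Injective K ∧ (∀ e, 0 < K e) ∧
      (∀ e, K e < (Fintype.card V + 2) ^ 2) ∧ ∀ a b, E a b → K a < K b := by
  classical
  have hirr : ∀ a, ¬ Relation.TransGen E a a := fun a ha => h (cycle_of_transGen ha)
  set N := Fintype.card V with hN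
  set preds : V → Finset V := fun b => Finset.univ.filter (fun a => Relation.TransGen E a b)
    with hpreds
  set ρ : V → ℕ := fun b => (preds b).card with hρdef
  have hρ : ∀ a b, E a b → ρ a < ρ b := by
    intro a b hab
    apply Finset.card_lt_card
    rw [Finset.ssubset_iff_of_subset]
    · refine ⟨a, ?_, ?_⟩
      · simp [hpreds, Relation.TransGen.single hab]
      · simp only [hpreds, Finset.mem_filter, Finset.mem_univ, true_and]
        exact hirr a
    · intro x hx
      simp only [hpreds, Finset.mem_filter, Finset.mem_univ, true_and] at hx ⊢
      exact hx.trans (Relation.TransGen.single hab)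
  have hρ_le : ∀ e, ρ e ≤ N := fun e =>
    le_trans (Finset.card_filter_le _ _) (le_of_eq Finset.card_univ)
  set ι : V → ℕ := fun e => ((Fintype.equivFin V) e : ℕ) with hιdef
  have hι_lt : ∀ e, ι e < N := fun e => (Fintype.equivFin V e).isLt
  have hι_inj : Function.Injective ι := fun a b hh =>
    (Fintype.equivFin V).injective (Fin.ext hh)
  refine ⟨fun e => (N + 1) * (ρ e + 1) + ι e, ?_, ?_, ?_, ?_⟩
  · intro a b hab
    dsimp only at hab
    apply hι_inj
    have ha := hι_lt a
    have hb := hι_lt b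
    have hmod : ((N + 1) * (ρ a + 1) + ι a) % (N + 1)
        = ((N + 1) * (ρ b + 1) + ι b) % (N + 1) := by rw [hab]
    rw [Nat.mul_add_mod, Nat.mul_add_mod, Nat.mod_eq_of_lt (by omega),
      Nat.mod_eq_of_lt (by omega)] at hmod
    exact hmod
  · intro e
    have : 0 < (N + 1) * (ρ e + 1) := Nat.mul_pos (by omega) (by omega)
    dsimp only
    omega
  · intro e
    have h1 := hρ_le e
    have h2 := hι_lt e
    dsimp only
    nlinarith
  · intro a b hab
    have h1 := hρ a b hab
    have h2 := hι_lt a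
    dsimp only
    nlinarith

theorem stmt_19 (m : ℕ) (B : Fin m → Fin m → Fin m → Prop)
    (hbet : IsBetweenness B)
    (hacyc : ¬ HasDirectedCycle (fun u v : Sym2 (Fin m) =>
        ∃ i j k, B i j k ∧ u = s(i, j) ∧ v = s(i, k)))
    (ε : ℝ) (hε : 0 < ε) :
    ∃ β : Sym2 (Fin m) → ℝ,
      (∀ e f : Sym2 (Fin m), ¬ e.IsDiag → ¬ f.IsDiag → β e = β f → e = f) ∧
      (∀ e : Sym2 (Fin m), ¬ e.IsDiag → β e ∈ Set.Ioo (1 / 4 : ℝ) (1 / 4 + ε)) ∧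
      ∀ i j k, B i j k → β s(i, j) > β s(i, k) ∧ β s(j, k) > β s(i, k) := by
  classical
  obtain ⟨K, hKinj, hKpos, hKub, hKlt⟩ := exists_rank hacyc
  set C : ℕ := (Fintype.card (Sym2 (Fin m)) + 2) ^ 2 with hC
  set L : Sym2 (Fin m) → ℕ := fun e => C - K e with hL
  have hLpos : ∀ e, 0 < L e := by
    intro e
    have := hKub e
    simp only [hL]
    omega
  have hLub : ∀ e, L e < C := by
    intro e
    have h1 := hKpos e
    have h2 := hKub e
    simp only [hL]
    omega
  have hLinj : Function.Injective L := by
    intro a b hab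
    apply hKinj
    have h1 := hKub a
    have h2 := hKub b
    simp only [hL] at hab
    omega
  have hLlt : ∀ a b : Sym2 (Fin m),
      (∃ i j k, B i j k ∧ a = s(i, j) ∧ b = s(i, k)) → L b < L a := by
    intro a b hab
    have h1 := hKlt a b hab
    have h2 := hKub b
    simp only [hL]
    omega
  have hM0 : (0 : ℝ) < (C : ℝ) := by positivity
  refine ⟨fun e => 1 / 4 + ε * (L e : ℝ) / (C : ℝ), ?_, ?_, ?_⟩
  · intro e f _ _ hef
    apply hLinj
    dsimp only at hef
    have h1 : ε * (L e : ℝ) / (C : ℝ) = ε * (L f : ℝ) / (C : ℝ) := by linarith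
    rw [div_left_inj' (ne_of_gt hM0), mul_right_inj' (ne_of_gt hε)] at h1
    rcases Or.inl h1 with h1 | h1
    · exact_mod_cast h1
    · exact absurd h1 (ne_of_gt hε)
  · intro e _
    constructor
    · have : 0 < ε * (L e : ℝ) / (C : ℝ) :=
        div_pos (mul_pos hε (by exact_mod_cast hLpos e)) hM0
      dsimp only
      linarith
    · have hlt : (L e : ℝ) < (C : ℝ) := by exact_mod_cast hLub e
      have : ε * (L e : ℝ) / (C : ℝ) < ε := by
        rw [div_lt_iff₀ hM0]
        nlinarith
      dsimp only
      linarith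
  · intro i j k hB
    have hmono : ∀ a b : Sym2 (Fin m), L a < L b →
        1 / 4 + ε * (L a : ℝ) / (C : ℝ) < 1 / 4 + ε * (L b : ℝ) / (C : ℝ) := by
      intro a b hab
      have : (L a : ℝ) < (L b : ℝ) := by exact_mod_cast hab
      gcongr
    have hB' : B k j i := (hbet i j k hB).2.1
    have e1 : L s(i, k) < L s(i, j) :=
      hLlt s(i, j) s(i, k) ⟨i, j, k, hB, rfl, rfl⟩
    have e2 : L s(i, k) < L s(j, k) := by
      have h := hLlt s(k, j) s(k, i) ⟨k, j, i, hB', rfl, rfl⟩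
      rwa [Sym2.eq_swap, show s(k, j) = s(j, k) from Sym2.eq_swap] at h
    exact ⟨hmono _ _ e1, hmono _ _ e2⟩
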